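/- Let d ≥ 2, μ > 0, η ∈ ℝ^d, and f(η) = √(|η|² + μ²). Fix j ∈ {1,...,d} and let M(η) = (∂²f/∂η_k∂η_l(η))_{k,l ≠ j}, and let v(η) = (∂²f/∂η_k∂η_j(η))_{k ≠ j} ∈ ℝ^{d−1}. Then M(η) is invertible and the Schur complement satisfies: ∂²f/∂η_j²(η) − v(η)^T M(η)^{−1} v(η) = μ² / ((η_j² + μ²) √(|η|² + μ²)). In particular this quantity is strictly positive, and for |η| ≤ R and μ ∈ (0,1] it is bounded below by μ²/((R²+1)√(R²+1)). -/

import Mathlib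

open Finset ContinuousLinearMap Matrix


/-- The Hessian matrix of `f(η) = √(|η|² + μ²)` at `η`. -/
noncomputable def hessKG {d : ℕ} (μ : ℝ) (η : Fin d → ℝ) : Matrix (Fin d) (Fin d) ℝ :=
  Matrix.of fun k l =>
    fderiv ℝ
      (fun η' : Fin d → ℝ =>
        fderiv ℝ (fun η'' : Fin d → ℝ => Real.sqrt ((∑ i, η'' i ^ 2) + μ ^ 2)) η'
          (Pi.single l 1))
      η (Pi.single k 1)

/-- The `(d-1)×(d-1)` submatrix of the Hessian of `f(η) = √(|η|² + μ²)` obtained by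
deleting the `j`-th row and `j`-th column. -/
noncomputable def hessKGsub {d : ℕ} (μ : ℝ) (η : Fin d → ℝ) (j : Fin d) :
    Matrix {k : Fin d // k ≠ j} {k : Fin d // k ≠ j} ℝ :=
  Matrix.of fun k l => hessKG μ η (k : Fin d) (l : Fin d)

/-- The mixed-derivative vector `v(η) = (∂²f/∂η_k∂η_j(η))_{k ≠ j}`. -/
noncomputable def hessKGmix {d : ℕ} (μ : ℝ) (η : Fin d → ℝ) (j : Fin d) :
    {k : Fin d // k ≠ j} → ℝ :=
  fun k => hessKG μ η (k : Fin d) j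



private lemma kgS_pos {d : ℕ} {μ : ℝ} (hμ : 0 < μ) (x : Fin d → ℝ) :
    0 < (∑ i, x i ^ 2) + μ ^ 2 :=
  add_pos_of_nonneg_of_pos (Finset.sum_nonneg fun i _ => sq_nonneg _) (pow_pos hμ 2)

noncomputable def kgGrad {d : ℕ} (μ : ℝ) (η : Fin d → ℝ) : (Fin d → ℝ) →L[ℝ] ℝ :=
  (Real.sqrt ((∑ i, η i ^ 2) + μ ^ 2))⁻¹ •
    (∑ i, η i • ContinuousLinearMap.proj (R := ℝ) (φ := fun _ : Fin d => ℝ) i)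

private lemma kg_hasFDerivAt {d : ℕ} {μ : ℝ} (hμ : 0 < μ) (η : Fin d → ℝ) :
    HasFDerivAt (fun x : Fin d → ℝ => Real.sqrt ((∑ i, x i ^ 2) + μ ^ 2)) (kgGrad μ η) η := by
  have hS := kgS_pos hμ η
  have hr : Real.sqrt ((∑ i, η i ^ 2) + μ ^ 2) ≠ 0 := (Real.sqrt_pos.2 hS).ne'
  have hq : HasFDerivAt (fun x : Fin d → ℝ => (∑ i, x i ^ 2) + μ ^ 2)
      (∑ i, (2 * η i) • ContinuousLinearMap.proj (R := ℝ) (φ := fun _ : Fin d => ℝ) i) η := by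
    have h1 : HasFDerivAt (fun x : Fin d → ℝ => ∑ i, x i ^ 2)
        (∑ i, (2 * η i) • ContinuousLinearMap.proj (R := ℝ) (φ := fun _ : Fin d => ℝ) i) η := by
      refine HasFDerivAt.fun_sum fun i _ => ?_
      have hp : HasFDerivAt (fun x : Fin d → ℝ => x i)
          (ContinuousLinearMap.proj (R := ℝ) (φ := fun _ : Fin d => ℝ) i) η :=
        (ContinuousLinearMap.proj (R := ℝ) (φ := fun _ : Fin d => ℝ) i).hasFDerivAt
      have := hp.mul hp
      simp only [pow_two]
      refine this.congr_fderiv ?_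
      ext x
      simp only [ContinuousLinearMap.add_apply, ContinuousLinearMap.smul_apply,
        ContinuousLinearMap.proj_apply, smul_eq_mul]
      ring
    exact h1.add_const _
  have hsq := (Real.hasDerivAt_sqrt hS.ne').comp_hasFDerivAt η hq
  refine HasFDerivAt.congr_fderiv hsq ?_
  ext x
  simp only [kgGrad, ContinuousLinearMap.smul_apply, ContinuousLinearMap.coe_sum',
    Finset.sum_apply, ContinuousLinearMap.coe_smul', Pi.smul_apply,
    ContinuousLinearMap.proj_apply, smul_eq_mul]
  rw [Finset.mul_sum, Finset.mul_sum]
  refine Finset.sum_congr rfl fun i _ => ?_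
  field_simp

private lemma kgGrad_apply {d : ℕ} (μ : ℝ) (η : Fin d → ℝ) (l : Fin d) :
    kgGrad μ η (Pi.single l 1) = η l / Real.sqrt ((∑ i, η i ^ 2) + μ ^ 2) := by
  classical
  simp only [kgGrad, ContinuousLinearMap.smul_apply, ContinuousLinearMap.coe_sum',
    Finset.sum_apply, ContinuousLinearMap.coe_smul', Pi.smul_apply,
    ContinuousLinearMap.proj_apply, smul_eq_mul, Pi.single_apply]
  rw [Finset.sum_congr rfl (fun i _ => by
    rw [mul_ite, mul_one, mul_zero] : ∀ i ∈ Finset.univ, η i * (if i = l then (1:ℝ) else 0)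
        = if i = l then η i else 0)]
  rw [Finset.sum_ite_eq' Finset.univ l η, if_pos (Finset.mem_univ l)]
  rw [div_eq_inv_mul]

private lemma kg_fderiv_eval {d : ℕ} {μ : ℝ} (hμ : 0 < μ) (η : Fin d → ℝ) (l : Fin d) :
    fderiv ℝ (fun x : Fin d → ℝ => Real.sqrt ((∑ i, x i ^ 2) + μ ^ 2)) η (Pi.single l 1)
      = η l / Real.sqrt ((∑ i, η i ^ 2) + μ ^ 2) := by
  rw [(kg_hasFDerivAt hμ η).fderiv, kgGrad_apply]

private lemma hessKG_apply {d : ℕ} {μ : ℝ} (hμ : 0 < μ) (η : Fin d → ℝ) (k l : Fin d) :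
    hessKG μ η k l = (if k = l then 1 else 0) / Real.sqrt ((∑ i, η i ^ 2) + μ ^ 2)
      - η k * η l / (((∑ i, η i ^ 2) + μ ^ 2) * Real.sqrt ((∑ i, η i ^ 2) + μ ^ 2)) := by
  classical
  have hS := kgS_pos hμ η
  have hrpos : 0 < Real.sqrt ((∑ i, η i ^ 2) + μ ^ 2) := Real.sqrt_pos.2 hS
  have hr : Real.sqrt ((∑ i, η i ^ 2) + μ ^ 2) ≠ 0 := hrpos.ne'
  have hfun : (fun η' : Fin d → ℝ =>
      fderiv ℝ (fun η'' : Fin d → ℝ => Real.sqrt ((∑ i, η'' i ^ 2) + μ ^ 2)) η'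
        (Pi.single l 1))
      = fun η' : Fin d → ℝ => η' l * (Real.sqrt ((∑ i, η' i ^ 2) + μ ^ 2))⁻¹ := by
    funext η'
    rw [kg_fderiv_eval hμ η' l, div_eq_mul_inv]
  have hp : HasFDerivAt (fun x : Fin d → ℝ => x l)
      (ContinuousLinearMap.proj (R := ℝ) (φ := fun _ : Fin d => ℝ) l) η :=
    (ContinuousLinearMap.proj (R := ℝ) (φ := fun _ : Fin d => ℝ) l).hasFDerivAt
  have hinv : HasFDerivAt (fun x : Fin d → ℝ => (Real.sqrt ((∑ i, x i ^ 2) + μ ^ 2))⁻¹)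
      ((-(Real.sqrt ((∑ i, η i ^ 2) + μ ^ 2) ^ 2)⁻¹) • kgGrad μ η) η :=
    (hasDerivAt_inv hr).comp_hasFDerivAt η (kg_hasFDerivAt hμ η)
  have hmul := hp.fun_mul hinv
  unfold hessKG
  rw [Matrix.of_apply, hfun, hmul.fderiv]
  simp only [ContinuousLinearMap.add_apply, ContinuousLinearMap.smul_apply,
    ContinuousLinearMap.proj_apply, smul_eq_mul, kgGrad_apply]
  rw [Real.sq_sqrt hS.le, Pi.single_apply]
  rcases eq_or_ne k l with h | h
  · subst h
    simp only [if_pos rfl]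
    field_simp
    ring
  · rw [if_neg h, if_neg (Ne.symm h)]
    field_simp
    ring

/-- **Schur complement of the Hessian of the Klein–Gordon symbol**: `M(η)` is invertible and
`∂²f/∂η_j² - vᵀ M⁻¹ v = μ² / ((η_j² + μ²)√(|η|²+μ²))`; this quantity is strictly positive,
and for `|η| ≤ R`, `μ ∈ (0,1]` it is at least `μ²/((R²+1)√(R²+1))`. -/
theorem stmt_10 (d : ℕ) (hd : 2 ≤ d) (μ : ℝ) (hμ : 0 < μ) (η : Fin d → ℝ) (j : Fin d) :
    IsUnit (hessKGsub μ η j).det ∧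
      hessKG μ η j j -
          (∑ k, hessKGmix μ η j k * (hessKGsub μ η j)⁻¹.mulVec (hessKGmix μ η j) k) =
        μ ^ 2 / ((η j ^ 2 + μ ^ 2) * Real.sqrt ((∑ i, η i ^ 2) + μ ^ 2)) ∧
      (0 < hessKG μ η j j -
          ∑ k, hessKGmix μ η j k * (hessKGsub μ η j)⁻¹.mulVec (hessKGmix μ η j) k) ∧
      ∀ R : ℝ, Real.sqrt (∑ i, η i ^ 2) ≤ R → μ ≤ 1 →
        μ ^ 2 / ((R ^ 2 + 1) * Real.sqrt (R ^ 2 + 1)) ≤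
          hessKG μ η j j -
            ∑ k, hessKGmix μ η j k * (hessKGsub μ η j)⁻¹.mulVec (hessKGmix μ η j) k := by
  classical
  have hQ : (0:ℝ) ≤ ∑ i, η i ^ 2 := Finset.sum_nonneg fun i _ => sq_nonneg _
  set S : ℝ := (∑ i, η i ^ 2) + μ ^ 2 with hSdef
  have hS : 0 < S := kgS_pos hμ η
  set r : ℝ := Real.sqrt S with hrdef
  have hrpos : 0 < r := Real.sqrt_pos.2 hS
  have hr : r ≠ 0 := hrpos.ne'
  have hr2 : r ^ 2 = S := Real.sq_sqrt hS.le
  have hP : 0 < η j ^ 2 + μ ^ 2 :=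
    add_pos_of_nonneg_of_pos (sq_nonneg _) (pow_pos hμ 2)
  set T : ℝ := ∑ k : {k : Fin d // k ≠ j}, η (k : Fin d) ^ 2 with hTdef
  have hT : η j ^ 2 + T = ∑ i, η i ^ 2 := by
    have hmem : ∀ x : Fin d, x ∈ Finset.univ.erase j ↔ x ≠ j := fun x => by simp
    have h1 : ∑ i ∈ Finset.univ.erase j, η i ^ 2
        = ∑ k : {k : Fin d // k ≠ j}, η (k : Fin d) ^ 2 :=
      Finset.sum_subtype (Finset.univ.erase j) hmem (fun i => η i ^ 2)
    rw [hTdef, ← h1]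
    exact Finset.add_sum_erase Finset.univ (fun i => η i ^ 2) (Finset.mem_univ j)
  have hTval : T = S - η j ^ 2 - μ ^ 2 := by rw [hSdef, ← hT]; ring
  set M := hessKGsub μ η j with hM
  have hK : ∀ k l : Fin d, hessKG μ η k l
      = (if k = l then 1 else 0) / r - η k * η l / (S * r) := by
    intro k l
    rw [hrdef, hSdef]
    exact hessKG_apply hμ η k l
  have hMentry : ∀ k l : {k : Fin d // k ≠ j}, M k l
      = (if k = l then 1 else 0) / r - η (k:Fin d) * η (l:Fin d) / (S * r) := by
    intro k l
    show hessKG μ η (k:Fin d) (l:Fin d) = _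
    rw [hK]
    simp only [Subtype.coe_inj]
  -- determinant
  have hMeq : M = r⁻¹ • ((1 : Matrix {k : Fin d // k ≠ j} {k : Fin d // k ≠ j} ℝ)
      + Matrix.replicateCol Unit (fun k : {k : Fin d // k ≠ j} => -(η (k:Fin d)))
        * Matrix.replicateRow Unit (fun k : {k : Fin d // k ≠ j} => η (k:Fin d) / S)) := by
    ext k l
    rw [hMentry k l]
    simp only [Matrix.smul_apply, Matrix.add_apply, Matrix.mul_apply, Finset.univ_unique,
      Finset.sum_singleton, Matrix.replicateCol_apply, Matrix.replicateRow_apply, Matrix.one_apply, smul_eq_mul]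
    rcases eq_or_ne k l with h | h
    · subst h
      field_simp
      ring
    · simp only [if_neg h]
      field_simp
      ring
  have hdot : (fun k : {k : Fin d // k ≠ j} => η (k:Fin d) / S) ⬝ᵥ
      (fun k : {k : Fin d // k ≠ j} => -(η (k:Fin d))) = -(T / S) := by
    simp only [dotProduct, hTdef, Finset.sum_div, ← Finset.sum_neg_distrib]
    refine Finset.sum_congr rfl fun k _ => ?_
    ring
  have hdet : M.det = (r⁻¹) ^ (Fintype.card {k : Fin d // k ≠ j}) * ((η j ^ 2 + μ ^ 2) / S) := by
    rw [hMeq, Matrix.det_smul, Matrix.det_one_add_replicateCol_mul_replicateRow, hdot]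
    congr 1
    rw [hTval]
    field_simp
    ring
  have hdetUnit : IsUnit M.det := by
    rw [hdet]
    exact (mul_ne_zero (pow_ne_zero _ (inv_ne_zero hr))
      (div_ne_zero hP.ne' hS.ne')).isUnit
  -- the candidate solution
  set wv : {k : Fin d // k ≠ j} → ℝ :=
    fun k => -(η j * η (k:Fin d)) / (η j ^ 2 + μ ^ 2) with hwv
  have hmix : ∀ k : {k : Fin d // k ≠ j}, hessKGmix μ η j k
      = -(η (k:Fin d) * η j / (S * r)) := by
    intro k
    show hessKG μ η (k:Fin d) j = _
    rw [hK, if_neg k.2]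
    ring
  have hMw : M.mulVec wv = hessKGmix μ η j := by
    funext k
    show ∑ l, M k l * wv l = hessKGmix μ η j k
    rw [hmix k]
    have step : ∀ l : {k : Fin d // k ≠ j}, M k l * wv l
        = (if k = l then wv l / r else 0)
          - (-(η (k:Fin d) * η j / (S * r * (η j ^ 2 + μ ^ 2)))) * η (l:Fin d) ^ 2 := by
      intro l
      rw [hMentry k l, hwv]
      rcases eq_or_ne k l with h | h
      · subst h; rw [if_pos rfl, if_pos rfl]
        field_simp
        ring
      · rw [if_neg h, if_neg h]
        field_simp
        ring
    rw [Finset.sum_congr rfl fun l _ => step l, Finset.sum_sub_distrib,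
      Finset.sum_ite_eq Finset.univ k, if_pos (Finset.mem_univ k),
      ← Finset.mul_sum, ← hTdef, hwv, hTval]
    field_simp
    ring
  have hsolve : M⁻¹.mulVec (hessKGmix μ η j) = wv := by
    rw [← hMw, Matrix.mulVec_mulVec, Matrix.nonsing_inv_mul M hdetUnit, Matrix.one_mulVec]
  have hval : hessKG μ η j j
      - (∑ k, hessKGmix μ η j k * M⁻¹.mulVec (hessKGmix μ η j) k)
      = μ ^ 2 / ((η j ^ 2 + μ ^ 2) * r) := by
    rw [hsolve]
    have hsum : ∑ k, hessKGmix μ η j k * wv k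
        = η j ^ 2 / (S * r * (η j ^ 2 + μ ^ 2)) * T := by
      rw [hTdef, Finset.mul_sum]
      refine Finset.sum_congr rfl fun k _ => ?_
      rw [hmix k, hwv]
      field_simp
    rw [hsum, hK, if_pos rfl, hTval]
    field_simp
    ring
  refine ⟨hdetUnit, hval, ?_, ?_⟩
  · rw [hval]
    exact div_pos (pow_pos hμ 2) (mul_pos hP hrpos)
  · intro R hR hμ1
    rw [hval]
    have hsum_le : (∑ i, η i ^ 2) ≤ R ^ 2 := by
      have h1 : Real.sqrt (∑ i, η i ^ 2) ^ 2 ≤ R ^ 2 :=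
        pow_le_pow_left₀ (Real.sqrt_nonneg _) hR 2
      rwa [Real.sq_sqrt hQ] at h1
    have hμ2 : μ ^ 2 ≤ 1 := by nlinarith
    have hηj : η j ^ 2 ≤ R ^ 2 :=
      le_trans (Finset.single_le_sum (fun i _ => sq_nonneg (η i)) (Finset.mem_univ j)) hsum_le
    have hP_le : η j ^ 2 + μ ^ 2 ≤ R ^ 2 + 1 := add_le_add hηj hμ2
    have hr_le : r ≤ Real.sqrt (R ^ 2 + 1) := by
      rw [hrdef, hSdef]
      exact Real.sqrt_le_sqrt (add_le_add hsum_le hμ2)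
    have hd2 : (η j ^ 2 + μ ^ 2) * r ≤ (R ^ 2 + 1) * Real.sqrt (R ^ 2 + 1) :=
      mul_le_mul hP_le hr_le hrpos.le (by positivity)
    exact div_le_div_of_nonneg_left (sq_nonneg μ) (mul_pos hP hrpos) hd2
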